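/- arXiv:0902.3152 — 3 statements merged into one kernel-verified Lean document; each statement's English description precedes it below -/
import Mathlib

section
/- Let Γ be a group generated by a finite set S with Kazhdan constant ε > 0 with respect to S (i.e., every unitary representation of Γ without nonzero invariant vectors has no unit vector v with ∑_{s∈S} ‖ρ(s)v − v‖²/|S| ≤ ε). Let 0 < δ < ε. If (ρ, H) is a unitary representation of Γ with a unit vector v satisfying (1/|S|)∑_{s∈S} ‖ρ(s)v − v‖² ≤ δ, then there exists a Γ-invariant vector v₀ ∈ H with ‖v − v₀‖² < δ/ε. -/
/-- A unitary representation of a (discrete) group `G` on a complex Hilbert space. -/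
structure UnitaryRep (G : Type) [Group G] where
  carrier : Type
  [ng : NormedAddCommGroup carrier]
  [ips : InnerProductSpace ℂ carrier]
  [cs : CompleteSpace carrier]
  ρ : G →* (carrier ≃ₗᵢ[ℂ] carrier)

attribute [instance] UnitaryRep.ng UnitaryRep.ips UnitaryRep.cs

/-- A representation has no nonzero invariant vectors. -/
def UnitaryRep.NoInvariantVectors {G : Type} [Group G] (π : UnitaryRep G) : Prop :=
  ∀ v : π.carrier, (∀ g : G, π.ρ g v = v) → v = 0

variable {G : Type} [Group G]

/-- invariant vectors submodule -/
def invSub (π : UnitaryRep G) : Submodule ℂ π.carrier where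
  carrier := {v | ∀ g : G, π.ρ g v = v}
  add_mem' := by intro a b ha hb g; simp [map_add, ha g, hb g]
  zero_mem' := by intro g; simp
  smul_mem' := by intro c a ha g; simp [map_smul, ha g]

lemma invSub_isClosed (π : UnitaryRep G) : IsClosed ((invSub π : Set π.carrier)) := by
  have : (invSub π : Set π.carrier) = ⋂ g : G, {v | π.ρ g v = v} := by
    ext x; simp [invSub, Set.mem_iInter]
  rw [this]
  exact isClosed_iInter fun g => isClosed_eq (π.ρ g).continuous continuous_id

lemma mem_ortho (π : UnitaryRep G) (g : G) {w : π.carrier} (hw : w ∈ (invSub π)ᗮ) :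
    π.ρ g w ∈ (invSub π)ᗮ := by
  intro u hu
  have h1 : π.ρ g u = u := hu g
  calc inner ℂ u (π.ρ g w) = inner ℂ (π.ρ g u) (π.ρ g w) := by rw [h1]
    _ = (inner ℂ u w : ℂ) := (π.ρ g).inner_map_map u w
    _ = 0 := hw u hu

lemma rho_inv_rho (π : UnitaryRep G) (g : G) (x : π.carrier) :
    π.ρ g⁻¹ (π.ρ g x) = x := by
  have h : π.ρ g⁻¹ * π.ρ g = 1 := by rw [← map_mul, inv_mul_cancel, map_one]
  have := congrFun (LinearIsometryEquiv.coe_mul (π.ρ g⁻¹) (π.ρ g)) x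
  rw [h] at this
  simpa using this.symm

noncomputable def resEquiv (π : UnitaryRep G) (g : G) : ((invSub π)ᗮ ≃ₗᵢ[ℂ] (invSub π)ᗮ) where
  toLinearEquiv :=
  { toFun := fun w => ⟨π.ρ g w, mem_ortho π g w.2⟩
    invFun := fun w => ⟨π.ρ g⁻¹ w, mem_ortho π g⁻¹ w.2⟩
    map_add' := by
      intro a b; ext
      show π.ρ g (a.1 + b.1) = π.ρ g a.1 + π.ρ g b.1
      exact map_add _ _ _
    map_smul' := by
      intro c a; ext
      show π.ρ g (c • a.1) = c • π.ρ g a.1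
      exact map_smul _ _ _
    left_inv := by intro a; ext; exact rho_inv_rho π g a.1
    right_inv := by
      intro a; ext
      show π.ρ g (π.ρ g⁻¹ a.1) = a.1
      have := rho_inv_rho π g⁻¹ a.1
      rwa [inv_inv] at this }
  norm_map' := by
    intro a
    show ‖π.ρ g a.1‖ = ‖a.1‖
    exact (π.ρ g).norm_map a.1

noncomputable def resRep (π : UnitaryRep G) : G →* ((invSub π)ᗮ ≃ₗᵢ[ℂ] (invSub π)ᗮ) where
  toFun := resEquiv π
  map_one' := by ext w; simp [resEquiv]
  map_mul' := by
    intro g h; ext w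
    simp only [resEquiv, LinearIsometryEquiv.coe_mul, Function.comp_apply]
    show (π.ρ (g * h)) w.1 = (π.ρ g) ((π.ρ h) w.1)
    rw [map_mul]
    exact congrFun (LinearIsometryEquiv.coe_mul (π.ρ g) (π.ρ h)) w.1

noncomputable def resUnitaryRep (π : UnitaryRep G) : UnitaryRep G where
  carrier := (invSub π)ᗮ
  ρ := resRep π

lemma resUnitaryRep_noInv (π : UnitaryRep G) : (resUnitaryRep π).NoInvariantVectors := by
  show ∀ w : ((invSub π)ᗮ : Submodule ℂ π.carrier), (∀ g : G, resRep π g w = w) → w = 0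
  intro w hw
  have hmem : (w : π.carrier) ∈ invSub π := fun g => congrArg Subtype.val (hw g)
  have h0 : (w : π.carrier) = 0 := inner_self_eq_zero.mp (w.2 (w : π.carrier) hmem)
  exact Subtype.ext h0


/-- Lemma 2.1: if `Γ` has average Kazhdan constant `ε` with respect to the finite
generating set `S`, `0 < δ < ε`, and a unitary representation has a unit vector `v` with
`(1/|S|) ∑_{s∈S} ‖ρ(s)v − v‖² ≤ δ`, then there is an invariant vector `v₀` with
`‖v − v₀‖² < δ/ε`. -/
theorem almost_invariant_close_to_invariant (G : Type) [Group G] (S : Finset G)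
    (hgen : Subgroup.closure (S : Set G) = ⊤) (ε δ : ℝ) (hε : 0 < ε) (hδ : 0 < δ)
    (hδε : δ < ε)
    (hKaz : ∀ π : UnitaryRep G, π.NoInvariantVectors →
      ∀ v : π.carrier, ‖v‖ = 1 → ε < (1 / (S.card : ℝ)) * ∑ s ∈ S, ‖π.ρ s v - v‖ ^ 2)
    (π : UnitaryRep G) (v : π.carrier) (hv : ‖v‖ = 1)
    (hinv : (1 / (S.card : ℝ)) * ∑ s ∈ S, ‖π.ρ s v - v‖ ^ 2 ≤ δ) :
    ∃ v₀ : π.carrier, (∀ g : G, π.ρ g v₀ = v₀) ∧ ‖v - v₀‖ ^ 2 < δ / ε := by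
  haveI : CompleteSpace (invSub π) := (invSub_isClosed π).completeSpace_coe
  set K := invSub π with hK
  set v₀ : π.carrier := ((K.orthogonalProjectionOnto v : K) : π.carrier) with hv₀
  have hv₀inv : ∀ g : G, π.ρ g v₀ = v₀ := (K.orthogonalProjectionOnto v).2
  refine ⟨v₀, hv₀inv, ?_⟩
  set w : π.carrier := v - v₀ with hwdef
  have hw : w ∈ Kᗮ := K.sub_starProjection_mem_orthogonal v
  show ‖w‖ ^ 2 < δ / ε
  by_cases h0 : w = 0
  · rw [h0]; simpa using div_pos hδ hε
  · have hwn : (0:ℝ) < ‖w‖ := norm_pos_iff.mpr h0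
    set u : (Kᗮ : Submodule ℂ π.carrier) := ((‖w‖⁻¹ : ℝ) : ℂ) • (⟨w, hw⟩ : (Kᗮ : Submodule ℂ π.carrier)) with hu_def
    have hucoe : (u : π.carrier) = ((‖w‖⁻¹ : ℝ) : ℂ) • w := rfl
    have hu : ‖u‖ = 1 := by
      rw [← Submodule.norm_coe, hucoe, norm_smul]
      simp [hwn.ne']
    have key : ε < (1 / (S.card : ℝ)) * ∑ s ∈ S, ‖(resRep π s u - u : (Kᗮ : Submodule ℂ π.carrier))‖ ^ 2 :=
      hKaz (resUnitaryRep π) (resUnitaryRep_noInv π) u hu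
    have hterm : ∀ s : G, ‖(resRep π s u - u : (Kᗮ : Submodule ℂ π.carrier))‖ ^ 2
        = ‖w‖⁻¹ ^ 2 * ‖π.ρ s v - v‖ ^ 2 := by
      intro s
      have hcoe : ((resRep π s u - u : (Kᗮ : Submodule ℂ π.carrier)) : π.carrier)
          = ((‖w‖⁻¹ : ℝ) : ℂ) • (π.ρ s w - w) := by
        show π.ρ s (((‖w‖⁻¹ : ℝ) : ℂ) • w) - ((‖w‖⁻¹ : ℝ) : ℂ) • w = _
        rw [map_smul]; module
      have hswv : π.ρ s w - w = π.ρ s v - v := by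
        rw [hwdef, map_sub, hv₀inv s]; abel
      rw [← Submodule.norm_coe, hcoe, hswv, norm_smul, mul_pow]
      congr 1
      simp [abs_of_nonneg hwn.le]
    have hsum : (1 / (S.card : ℝ)) * ∑ s ∈ S, ‖(resRep π s u - u : (Kᗮ : Submodule ℂ π.carrier))‖ ^ 2
        = ‖w‖⁻¹ ^ 2 * ((1 / (S.card : ℝ)) * ∑ s ∈ S, ‖π.ρ s v - v‖ ^ 2) := by
      rw [Finset.sum_congr rfl fun s _ => hterm s, ← Finset.mul_sum]
      ring
    rw [hsum] at key
    have hδ' : ε < ‖w‖⁻¹ ^ 2 * δ := lt_of_lt_of_le key (by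
      have : (0:ℝ) ≤ ‖w‖⁻¹ ^ 2 := by positivity
      nlinarith)
    rw [lt_div_iff₀ hε]
    have h2 : ‖w‖⁻¹ ^ 2 * ‖w‖ ^ 2 = 1 := by
      field_simp
    nlinarith [pow_pos hwn 2]
end

section
/- Let p be a prime and n ≥ 2. There exists a non-split extension of the additive group of the group algebra 𝔽_p[C_p] by the cyclic group C_{p^n}, where C_{p^n} acts on 𝔽_p[C_p] by left translation modulo p (i.e., via the projection C_{p^n} → C_p followed by left multiplication). Equivalently, H²(C_{p^n}, 𝔽_p[C_p], θ) ≠ 0 for this action θ. -/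
set_option linter.unusedSectionVars false
namespace NonsplitAux

variable (p n : ℕ) [Fact p.Prime]

def tau (c : ZMod p) : (ZMod p → ZMod p) ≃+ (ZMod p → ZMod p) where
  toFun f x := f (x - c)
  invFun f x := f (x + c)
  left_inv f := by funext x; simp
  right_inv f := by funext x; simp
  map_add' f g := rfl

def phi : Multiplicative (ZMod (p ^ (n + 1))) →* MulAut (Multiplicative (ZMod p → ZMod p)) :=
  MonoidHom.mk' (fun h => AddEquiv.toMultiplicative
    (tau p (ZMod.castHom (dvd_pow_self p (Nat.succ_ne_zero n)) (ZMod p) h.toAdd)))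
    (by
      intro a b
      ext f : 1
      show (fun x => _) = _
      funext x
      simp [tau, MulAut.mul_def, sub_sub, map_add])

theorem phi_apply (h : Multiplicative (ZMod (p ^ (n + 1)))) (f : ZMod p → ZMod p) :
    phi p n h (Multiplicative.ofAdd f) = Multiplicative.ofAdd
      (fun x => f (x - ZMod.castHom (dvd_pow_self p (Nat.succ_ne_zero n)) (ZMod p) h.toAdd)) :=
  rfl

/-- `phi` fixes constant functions. -/
theorem phi_const (h : Multiplicative (ZMod (p ^ (n + 1)))) (v : ZMod p) :
    phi p n h (Multiplicative.ofAdd (fun _ => v)) = Multiplicative.ofAdd (fun _ => v) :=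
  rfl

abbrev G0 := Multiplicative (ZMod p → ZMod p) ⋊[phi p n] Multiplicative (ZMod (p ^ (n + 1)))

def c1 : Multiplicative (ZMod p → ZMod p) := Multiplicative.ofAdd (fun _ => (1 : ZMod p))

def a0 : Multiplicative (ZMod (p ^ (n + 1))) :=
  Multiplicative.ofAdd ((p ^ n : ℕ) : ZMod (p ^ (n + 1)))

def z : G0 p n := ⟨c1 p, a0 p n⟩

theorem z_central (hn : n ≠ 0) (g : G0 p n) : Commute g (z p n) := by
  show _ = _
  ext : 1
  · show g.left * phi p n g.right (c1 p) = c1 p * phi p n (a0 p n) g.left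
    rw [show phi p n g.right (c1 p) = c1 p from rfl]
    have h2 : phi p n (a0 p n) g.left = g.left := by
      have := phi_apply p n (a0 p n) g.left.toAdd
      rw [ofAdd_toAdd] at this
      rw [this]
      have hc : ZMod.castHom (dvd_pow_self p (Nat.succ_ne_zero n)) (ZMod p)
          (Multiplicative.toAdd (a0 p n)) = 0 := by
        show ZMod.castHom _ (ZMod p) ((p ^ n : ℕ) : ZMod (p ^ (n + 1))) = 0
        rw [map_natCast]
        exact (ZMod.natCast_eq_zero_iff _ _).2 (dvd_pow_self p hn)
      rw [hc]
      simp
    rw [h2, mul_comm]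
  · show g.right * a0 p n = a0 p n * g.right
    rw [mul_comm]


theorem z_eq : z p n = SemidirectProduct.inl (c1 p) * SemidirectProduct.inr (a0 p n) := by
  ext : 1
  · show c1 p = c1 p * phi p n 1 1
    simp
  · show a0 p n = 1 * a0 p n
    simp

theorem commute_c1_a0 :
    Commute (SemidirectProduct.inl (c1 p) : G0 p n) (SemidirectProduct.inr (a0 p n)) := by
  show _ = _
  ext : 1
  · show c1 p * phi p n 1 1 = 1 * phi p n (a0 p n) (c1 p)
    rw [show phi p n (a0 p n) (c1 p) = c1 p from rfl]; simp
  · show 1 * a0 p n = a0 p n * 1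
    simp

theorem z_zpow (k : ℤ) :
    (z p n) ^ k = (⟨c1 p ^ k, a0 p n ^ k⟩ : G0 p n) := by
  rw [z_eq, (commute_c1_a0 p n).mul_zpow, ← map_zpow, ← map_zpow,
    ← SemidirectProduct.inl_left_mul_inr_right (⟨c1 p ^ k, a0 p n ^ k⟩ : G0 p n)]

theorem z_pow (k : ℕ) :
    (z p n) ^ k = (⟨c1 p ^ k, a0 p n ^ k⟩ : G0 p n) := by
  have := z_zpow p n (k : ℤ)
  rw [zpow_natCast] at this
  rw [this]
  norm_num

theorem c1_zpow (k : ℤ) : (c1 p) ^ k = Multiplicative.ofAdd (fun _ => (k : ZMod p)) := by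
  apply Multiplicative.toAdd.injective
  rw [toAdd_zpow]
  funext x
  show k • (1 : ZMod p) = (k : ZMod p)
  rw [zsmul_eq_mul, mul_one]

theorem a0_zpow (k : ℤ) :
    (a0 p n) ^ k = Multiplicative.ofAdd (((k * p ^ n : ℤ) : ZMod (p ^ (n + 1)))) := by
  apply Multiplicative.toAdd.injective
  rw [toAdd_zpow]
  show k • (((p ^ n : ℕ) : ZMod (p ^ (n + 1)))) = _
  rw [zsmul_eq_mul, toAdd_ofAdd]
  push_cast
  ring


def Z (hn : n ≠ 0) : Subgroup (G0 p n) := Subgroup.zpowers (z p n)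

instance Z_normal (hn : n ≠ 0) : (Z p n hn).Normal := by
  constructor
  rintro _ ⟨k, rfl⟩ g
  have h : g * (z p n) ^ k * g⁻¹ = (z p n) ^ k := by
    rw [((z_central p n hn g).zpow_right k).eq, mul_inv_cancel_right]
  rw [h]
  exact ⟨k, rfl⟩

abbrev Gq (hn : n ≠ 0) : Type := (G0 p n) ⧸ (Z p n hn)

def iota (hn : n ≠ 0) : Multiplicative (ZMod p → ZMod p) →* Gq p n hn :=
  (QuotientGroup.mk' (Z p n hn)).comp SemidirectProduct.inl

def pi0 : G0 p n →* Multiplicative (ZMod (p ^ n)) :=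
  (AddMonoidHom.toMultiplicative
    (ZMod.castHom (pow_dvd_pow p (Nat.le_succ n)) (ZMod (p ^ n))).toAddMonoidHom).comp
    SemidirectProduct.rightHom

theorem pi0_z : pi0 p n (z p n) = 1 := by
  show Multiplicative.ofAdd (ZMod.castHom (pow_dvd_pow p (Nat.le_succ n)) (ZMod (p ^ n))
    ((p ^ n : ℕ) : ZMod (p ^ (n + 1)))) = 1
  rw [map_natCast, ZMod.natCast_self]
  rfl

def pi (hn : n ≠ 0) : Gq p n hn →* Multiplicative (ZMod (p ^ n)) :=
  QuotientGroup.lift (Z p n hn) (pi0 p n) (by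
    rintro x ⟨k, rfl⟩
    simp [MonoidHom.mem_ker, map_zpow, pi0_z])

theorem pi0_apply (x : G0 p n) : pi0 p n x = Multiplicative.ofAdd
    (ZMod.castHom (pow_dvd_pow p (Nat.le_succ n)) (ZMod (p ^ n))
      (Multiplicative.toAdd x.right)) := rfl

theorem pi_mk (hn : n ≠ 0) (x : G0 p n) :
    pi p n hn (QuotientGroup.mk' (Z p n hn) x) = pi0 p n x := rfl


theorem iota_inj (hn : n ≠ 0) : Function.Injective (iota p n hn) := by
  rw [injective_iff_map_eq_one]
  intro f hf
  have hmem : SemidirectProduct.inl f ∈ Z p n hn :=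
    (QuotientGroup.eq_one_iff (SemidirectProduct.inl f)).1 hf
  obtain ⟨k, hk⟩ := hmem
  simp only at hk
  rw [z_zpow] at hk
  have hr : a0 p n ^ k = 1 := congrArg SemidirectProduct.right hk
  have hl : c1 p ^ k = f := congrArg SemidirectProduct.left hk
  rw [a0_zpow] at hr
  have hdvd : ((p : ℤ) ^ (n + 1)) ∣ k * (p : ℤ) ^ n := by
    have := congrArg Multiplicative.toAdd hr
    rw [toAdd_ofAdd, toAdd_one] at this
    exact_mod_cast (ZMod.intCast_zmod_eq_zero_iff_dvd _ _).1 this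
  have hpk : (p : ℤ) ∣ k := by
    have h1 : (p : ℤ) ^ (n + 1) = (p : ℤ) ^ n * p := by ring
    rw [h1, mul_comm k] at hdvd
    exact (mul_dvd_mul_iff_left (a := (p : ℤ) ^ n)
      (pow_ne_zero n (by exact_mod_cast (Fact.out (p := p.Prime)).ne_zero))).1 hdvd
  have hk0 : ((k : ℤ) : ZMod p) = 0 := (ZMod.intCast_zmod_eq_zero_iff_dvd _ _).2 hpk
  rw [← hl, c1_zpow, hk0]
  rfl

theorem pi_surj (hn : n ≠ 0) : Function.Surjective (pi p n hn) := by
  intro t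
  haveI : NeZero (p ^ n) :=
    ⟨pow_ne_zero n (Fact.out (p := p.Prime)).ne_zero⟩
  refine ⟨QuotientGroup.mk' (Z p n hn)
    (SemidirectProduct.inr (Multiplicative.ofAdd (((Multiplicative.toAdd t).val : ℕ) :
      ZMod (p ^ (n + 1))))), ?_⟩
  rw [pi_mk, pi0_apply]
  show Multiplicative.ofAdd (ZMod.castHom _ (ZMod (p ^ n))
    (((Multiplicative.toAdd t).val : ℕ) : ZMod (p ^ (n + 1)))) = t
  rw [map_natCast, ZMod.natCast_val, ZMod.cast_id]
  rfl


theorem a0_pow (k : ℕ) :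
    a0 p n ^ k = Multiplicative.ofAdd (((k * p ^ n : ℕ) : ZMod (p ^ (n + 1)))) := by
  apply Multiplicative.toAdd.injective
  rw [toAdd_pow, toAdd_ofAdd]
  show k • (((p ^ n : ℕ) : ZMod (p ^ (n + 1)))) = _
  rw [nsmul_eq_mul]
  push_cast
  ring

theorem range_eq_ker (hn : n ≠ 0) : (iota p n hn).range = (pi p n hn).ker := by
  haveI : NeZero (p ^ (n + 1)) := ⟨pow_ne_zero _ (Fact.out (p := p.Prime)).ne_zero⟩
  ext g
  constructor
  · rintro ⟨f, rfl⟩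
    show pi p n hn (QuotientGroup.mk' (Z p n hn) (SemidirectProduct.inl f)) = 1
    rw [pi_mk, pi0_apply]
    show Multiplicative.ofAdd (ZMod.castHom _ (ZMod (p ^ n)) (Multiplicative.toAdd
      (1 : Multiplicative (ZMod (p ^ (n + 1)))))) = 1
    rw [toAdd_one, map_zero]
    rfl
  · intro hg
    obtain ⟨x, rfl⟩ := QuotientGroup.mk'_surjective (Z p n hn) g
    rw [MonoidHom.mem_ker, pi_mk, pi0_apply] at hg
    set a := Multiplicative.toAdd x.right with ha
    have hav : ((a.val : ℕ) : ZMod (p ^ (n + 1))) = a := by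
      rw [ZMod.natCast_val, ZMod.cast_id]
    have h0 : ((a.val : ℕ) : ZMod (p ^ n)) = 0 := by
      have h1 := congrArg Multiplicative.toAdd hg
      rw [toAdd_ofAdd, toAdd_one] at h1
      rw [← hav, map_natCast] at h1
      exact h1
    have hdvd : p ^ n ∣ a.val := (ZMod.natCast_eq_zero_iff _ _).1 h0
    set k := a.val / p ^ n with hk
    have hkk : k * p ^ n = a.val := Nat.div_mul_cancel hdvd
    have hx : x = SemidirectProduct.inl (x.left * (c1 p ^ k)⁻¹) * (z p n) ^ k := by
      rw [z_pow]
      ext : 1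
      · show x.left = x.left * (c1 p ^ k)⁻¹ * phi p n 1 (c1 p ^ k)
        rw [map_one]
        simp
      · show x.right = 1 * a0 p n ^ k
        rw [one_mul, a0_pow, hkk, hav]
        exact (ofAdd_toAdd x.right).symm
    refine ⟨x.left * (c1 p ^ k)⁻¹, ?_⟩
    have hmkz : QuotientGroup.mk' (Z p n hn) ((z p n) ^ k) = 1 := by
      rw [QuotientGroup.mk'_apply, QuotientGroup.eq_one_iff]
      exact Subgroup.pow_mem _ (Subgroup.mem_zpowers _) k
    show QuotientGroup.mk' (Z p n hn) (SemidirectProduct.inl (x.left * (c1 p ^ k)⁻¹)) = _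
    symm
    conv_lhs => rw [hx, map_mul, hmkz]
    rw [mul_one]

theorem conj_inl (x : G0 p n) (u : Multiplicative (ZMod p → ZMod p)) :
    x * SemidirectProduct.inl u * x⁻¹ = SemidirectProduct.inl (phi p n x.right u) := by
  ext
  · simp only [SemidirectProduct.mul_left, SemidirectProduct.mul_right,
      SemidirectProduct.inv_left, SemidirectProduct.inv_right, SemidirectProduct.left_inl,
      SemidirectProduct.right_inl, mul_one, ← MulAut.mul_apply, mul_inv_cancel,
      MulAut.one_apply]
    rw [mul_comm x.left]
    rw [← map_mul (phi p n), mul_inv_cancel, map_one, MulAut.one_apply, mul_assoc,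
      mul_inv_cancel, mul_one]
  · simp only [SemidirectProduct.mul_right, SemidirectProduct.inv_right,
      SemidirectProduct.right_inl, mul_one, mul_inv_cancel]


theorem x_pow (x : G0 p n) (k : ℕ) :
    x ^ k = (⟨Multiplicative.ofAdd (fun t => ∑ i ∈ Finset.range k,
      Multiplicative.toAdd x.left (t - (i : ℕ) *
        ZMod.castHom (dvd_pow_self p (Nat.succ_ne_zero n)) (ZMod p)
          (Multiplicative.toAdd x.right))), x.right ^ k⟩ : G0 p n) := by
  set c := ZMod.castHom (dvd_pow_self p (Nat.succ_ne_zero n)) (ZMod p)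
    (Multiplicative.toAdd x.right) with hc
  induction k with
  | zero =>
    ext : 1
    · show (1 : Multiplicative (ZMod p → ZMod p)) = _
      apply Multiplicative.toAdd.injective
      rw [toAdd_ofAdd, toAdd_one]
      funext t
      simp
    · show (1 : Multiplicative (ZMod (p ^ (n + 1)))) = x.right ^ 0
      rw [pow_zero]
  | succ k ih =>
    rw [pow_succ, ih]
    ext : 1
    · show Multiplicative.ofAdd _ * phi p n (x.right ^ k) x.left = _
      have hphi : phi p n (x.right ^ k) x.left =
          Multiplicative.ofAdd (fun t => Multiplicative.toAdd x.left (t - (k : ℕ) * c)) := by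
        have := phi_apply p n (x.right ^ k) (Multiplicative.toAdd x.left)
        rw [ofAdd_toAdd] at this
        rw [this]
        congr 1
        funext t
        congr 1
        rw [toAdd_pow, map_nsmul, nsmul_eq_mul]
      rw [hphi]
      apply Multiplicative.toAdd.injective
      rw [toAdd_mul, toAdd_ofAdd, toAdd_ofAdd, toAdd_ofAdd]
      funext t
      show (∑ i ∈ Finset.range k, Multiplicative.toAdd x.left (t - (i : ℕ) * c)) +
        Multiplicative.toAdd x.left (t - (k : ℕ) * c) =
        ∑ i ∈ Finset.range (k + 1), Multiplicative.toAdd x.left (t - (i : ℕ) * c)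
      rw [Finset.sum_range_succ]
    · show x.right ^ k * x.right = x.right ^ (k + 1)
      exact (pow_succ x.right k).symm

theorem sum_vanish (hn2 : 2 ≤ n) (m0 : ZMod p → ZMod p) (t : ZMod p) :
    ∑ i ∈ Finset.range (p ^ n), m0 (t - (i : ℕ)) = 0 := by
  obtain ⟨e, rfl⟩ : ∃ e, n = e + 1 := ⟨n - 1, by omega⟩
  have he : e ≠ 0 := by omega
  have hpn : p ^ (e + 1) = p ^ e * p := by ring
  rw [hpn]
  rw [Finset.sum_range fun i => m0 (t - (i : ℕ))]
  rw [← Equiv.sum_comp finProdFinEquiv fun j : Fin (p ^ e * p) => m0 (t - ((j : ℕ) : ZMod p))]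
  have hval : ∀ x : Fin (p ^ e) × Fin p,
      (((finProdFinEquiv x : Fin (p ^ e * p)) : ℕ) : ZMod p) = ((x.2 : ℕ) : ZMod p) := by
    intro x
    show (((x.2 : ℕ) + p * (x.1 : ℕ) : ℕ) : ZMod p) = _
    push_cast
    rw [ZMod.natCast_self]
    ring
  rw [Fintype.sum_prod_type]
  have : ∀ x1 : Fin (p ^ e), ∑ x2 : Fin p,
      m0 (t - (((finProdFinEquiv (x1, x2) : Fin (p ^ e * p)) : ℕ) : ZMod p)) =
      ∑ x2 : Fin p, m0 (t - ((x2 : ℕ) : ZMod p)) := by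
    intro x1
    refine Finset.sum_congr rfl fun x2 _ => ?_
    rw [hval (x1, x2)]
  rw [Finset.sum_congr rfl fun x1 _ => this x1]
  rw [Finset.sum_const, Finset.card_univ, Fintype.card_fin, nsmul_eq_mul]
  rw [show ((p ^ e : ℕ) : ZMod p) = 0 from
    (ZMod.natCast_eq_zero_iff _ _).2 (dvd_pow_self p he)]
  rw [zero_mul]


theorem x_pow_pn (hn2 : 2 ≤ n) (x : G0 p n)
    (hx : ZMod.castHom (pow_dvd_pow p (Nat.le_succ n)) (ZMod (p ^ n))
      (Multiplicative.toAdd x.right) = 1) :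
    x ^ (p ^ n) = SemidirectProduct.inr (a0 p n) := by
  haveI : NeZero (p ^ (n + 1)) := ⟨pow_ne_zero _ (Fact.out (p := p.Prime)).ne_zero⟩
  set a := Multiplicative.toAdd x.right with ha
  have hn0 : n ≠ 0 := by omega
  have hc1 : ZMod.castHom (dvd_pow_self p (Nat.succ_ne_zero n)) (ZMod p) a = 1 := by
    have hcomp := RingHom.congr_fun
      (ZMod.castHom_comp (dvd_pow_self p hn0) (pow_dvd_pow p (Nat.le_succ n))) a
    have : ZMod.castHom (dvd_pow_self p (Nat.succ_ne_zero n)) (ZMod p) a =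
        ZMod.castHom (dvd_pow_self p hn0) (ZMod p)
          (ZMod.castHom (pow_dvd_pow p (Nat.le_succ n)) (ZMod (p ^ n)) a) := hcomp.symm
    rw [this, hx, map_one]
  have hav : ((a.val : ℕ) : ZMod (p ^ (n + 1))) = a := by
    rw [ZMod.natCast_val, ZMod.cast_id]
  have hval1 : (((a.val : ℕ) : ℤ) : ZMod (p ^ n)) = 1 := by
    have hnat : ((a.val : ℕ) : ZMod (p ^ n)) = 1 := by
      rw [← map_natCast (ZMod.castHom (pow_dvd_pow p (Nat.le_succ n)) (ZMod (p ^ n))) a.val,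
        hav, hx]
    rw [Int.cast_natCast]
    exact hnat
  have hdvd : (p : ℤ) ∣ ((a.val : ℤ) - 1) := by
    have h2 : (((a.val : ℤ) - 1 : ℤ) : ZMod (p ^ n)) = 0 := by
      rw [Int.cast_sub, Int.cast_one, hval1, sub_self]
    have := (ZMod.intCast_zmod_eq_zero_iff_dvd _ _).1 h2
    exact dvd_trans (by exact_mod_cast dvd_pow_self (p : ℤ) hn0) this
  obtain ⟨tt, htt⟩ := hdvd
  have hright : x.right ^ (p ^ n) = a0 p n := by
    apply Multiplicative.toAdd.injective
    rw [toAdd_pow]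
    show (p ^ n) • a = ((p ^ n : ℕ) : ZMod (p ^ (n + 1)))
    rw [nsmul_eq_mul]
    have ha' : a = (((a.val : ℤ)) : ZMod (p ^ (n + 1))) := by
      rw [Int.cast_natCast, hav]
    have haval : (a.val : ℤ) = 1 + p * tt := by rw [← htt]; ring
    rw [ha', haval]
    have hz : ((p : ZMod (p ^ (n + 1))))^(n+1) = 0 := by
      have := ZMod.natCast_self (p ^ (n + 1))
      push_cast at this
      exact this
    push_cast
    linear_combination (tt : ZMod (p ^ (n + 1))) * hz
  rw [x_pow]
  ext : 1
  · show Multiplicative.ofAdd _ = (1 : Multiplicative (ZMod p → ZMod p))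
    apply Multiplicative.toAdd.injective
    rw [toAdd_ofAdd, toAdd_one]
    funext t
    show ∑ i ∈ Finset.range (p ^ n), Multiplicative.toAdd x.left (t - (i : ℕ) *
      ZMod.castHom (dvd_pow_self p (Nat.succ_ne_zero n)) (ZMod p) a) = 0
    simp only [hc1, mul_one]
    exact sum_vanish p n hn2 _ t
  · show x.right ^ (p ^ n) = a0 p n
    exact hright


theorem conj_formula (hn : n ≠ 0) (g : Gq p n hn) (f : ZMod p → ZMod p) :
    g * iota p n hn (Multiplicative.ofAdd f) * g⁻¹ =
      iota p n hn (Multiplicative.ofAdd (fun x : ZMod p =>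
        f (x - ZMod.castHom (dvd_pow_self p hn) (ZMod p)
          (Multiplicative.toAdd (pi p n hn g))))) := by
  obtain ⟨x, rfl⟩ := QuotientGroup.mk'_surjective (Z p n hn) g
  rw [iota, MonoidHom.comp_apply, ← map_inv, ← map_mul, ← map_mul, conj_inl]
  rw [MonoidHom.comp_apply, pi_mk, pi0_apply, toAdd_ofAdd]
  congr 1
  have h1 := phi_apply p n x.right f
  rw [h1]
  congr 1
  funext t
  congr 1
  have hcomp := RingHom.congr_fun
    (ZMod.castHom_comp (dvd_pow_self p hn) (pow_dvd_pow p (Nat.le_succ n)))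
    (Multiplicative.toAdd x.right)
  rw [RingHom.comp_apply] at hcomp
  rw [← hcomp]

theorem not_split (hn2 : 2 ≤ n) (hn : n ≠ 0) :
    ¬∃ s : Multiplicative (ZMod (p ^ n)) →* Gq p n hn,
      (pi p n hn).comp s = MonoidHom.id (Multiplicative (ZMod (p ^ n))) := by
  haveI : NeZero (p ^ n) := ⟨pow_ne_zero _ (Fact.out (p := p.Prime)).ne_zero⟩
  rintro ⟨s, hs⟩
  set u := s (Multiplicative.ofAdd (1 : ZMod (p ^ n))) with hu
  obtain ⟨x, hx⟩ := QuotientGroup.mk'_surjective (Z p n hn) u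
  have hpiu : pi p n hn u = Multiplicative.ofAdd (1 : ZMod (p ^ n)) :=
    DFunLike.congr_fun hs (Multiplicative.ofAdd (1 : ZMod (p ^ n)))
  have hxr : ZMod.castHom (pow_dvd_pow p (Nat.le_succ n)) (ZMod (p ^ n))
      (Multiplicative.toAdd x.right) = 1 := by
    have := hpiu
    rw [← hx, pi_mk, pi0_apply] at this
    have h2 := congrArg Multiplicative.toAdd this
    rw [toAdd_ofAdd, toAdd_ofAdd] at h2
    exact h2
  have hgen : (Multiplicative.ofAdd (1 : ZMod (p ^ n))) ^ (p ^ n) = 1 := by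
    apply Multiplicative.toAdd.injective
    rw [toAdd_pow, toAdd_ofAdd, toAdd_one, nsmul_eq_mul, mul_one, ZMod.natCast_self]
  have hu1 : u ^ (p ^ n) = 1 := by
    rw [hu, ← map_pow, hgen, map_one]
  have hmem : SemidirectProduct.inr (a0 p n) ∈ Z p n hn := by
    have h3 : QuotientGroup.mk' (Z p n hn) (x ^ (p ^ n)) = 1 := by
      rw [map_pow, hx, hu1]
    rw [x_pow_pn p n hn2 x hxr] at h3
    exact (QuotientGroup.eq_one_iff _).1 h3
  obtain ⟨k, hk⟩ := hmem
  simp only at hk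
  rw [z_zpow] at hk
  have hleft : c1 p ^ k = 1 := by
    have := congrArg SemidirectProduct.left hk
    simpa using this
  have hright : a0 p n ^ k = a0 p n := by
    have := congrArg SemidirectProduct.right hk
    simpa using this
  have hpk : (p : ℤ) ∣ k := by
    rw [c1_zpow] at hleft
    have h4 := congrArg Multiplicative.toAdd hleft
    rw [toAdd_ofAdd, toAdd_one] at h4
    have h5 : ((k : ℤ) : ZMod p) = 0 := congrFun h4 0
    exact (ZMod.intCast_zmod_eq_zero_iff_dvd _ _).1 h5
  have hpk1 : (p : ℤ) ∣ (k - 1) := by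
    rw [a0_zpow] at hright
    have h6' := congrArg Multiplicative.toAdd hright
    rw [toAdd_ofAdd] at h6'
    have h6 : ((k * (p : ℤ) ^ n : ℤ) : ZMod (p ^ (n + 1))) =
        ((p ^ n : ℕ) : ZMod (p ^ (n + 1))) := by exact_mod_cast h6'
    have h7 : (((k - 1) * p ^ n : ℤ) : ZMod (p ^ (n + 1))) = 0 := by
      have : (((k - 1) * p ^ n : ℤ) : ZMod (p ^ (n + 1))) =
          ((k * p ^ n : ℤ) : ZMod (p ^ (n + 1))) - (((p ^ n : ℕ) : ℤ) : ZMod (p ^ (n + 1))) := by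
        push_cast
        ring
      rw [this, h6]
      have : (((p ^ n : ℕ) : ℤ) : ZMod (p ^ (n + 1))) = ((p ^ n : ℕ) : ZMod (p ^ (n + 1))) :=
        Int.cast_natCast _
      rw [this, sub_self]
    have h8 := (ZMod.intCast_zmod_eq_zero_iff_dvd _ _).1 h7
    have h9 : ((p : ℤ) ^ (n + 1)) ∣ (k - 1) * (p : ℤ) ^ n := by exact_mod_cast h8
    have h10 : (p : ℤ) ^ (n + 1) = (p : ℤ) ^ n * p := by ring
    rw [h10, mul_comm (k - 1)] at h9
    exact (mul_dvd_mul_iff_left (a := (p : ℤ) ^ n)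
      (pow_ne_zero n (by exact_mod_cast (Fact.out (p := p.Prime)).ne_zero))).1 h9
  have : (p : ℤ) ∣ 1 := by
    have := dvd_sub hpk hpk1
    simpa using this
  have hp1 : (p : ℤ) = 1 ∨ (p : ℤ) = -1 := Int.isUnit_iff.1 (isUnit_of_dvd_one this)
  have := (Fact.out (p := p.Prime)).one_lt
  omega

end NonsplitAux


/-- Lemma 3.4: for a prime `p` and `n ≥ 2` there is a non-split extension of the additive
group of the group algebra `𝔽_p[C_p]` (realized as functions `C_p → 𝔽_p`) by the cyclic
group `C_{p^n}`, where `C_{p^n}` acts by left translation modulo `p`. -/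
theorem nonsplit_extension_of_group_algebra (p n : ℕ) [Fact p.Prime] (hn : 2 ≤ n) :
    ∃ (G : Type) (_ : Group G)
      (ι : Multiplicative (ZMod p → ZMod p) →* G)
      (π : G →* Multiplicative (ZMod (p ^ n))),
        Function.Injective ι ∧ Function.Surjective π ∧ ι.range = π.ker ∧
        (∀ (g : G) (f : ZMod p → ZMod p),
          g * ι (Multiplicative.ofAdd f) * g⁻¹ =
            ι (Multiplicative.ofAdd (fun x : ZMod p =>
              f (x - ZMod.castHom (dvd_pow_self p (by omega : n ≠ 0)) (ZMod p)
                (Multiplicative.toAdd (π g)))))) ∧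
        ¬∃ s : Multiplicative (ZMod (p ^ n)) →* G,
            π.comp s = MonoidHom.id (Multiplicative (ZMod (p ^ n))) := by
  have hn0 : n ≠ 0 := by omega
  exact ⟨NonsplitAux.Gq p n hn0, inferInstance, NonsplitAux.iota p n hn0, NonsplitAux.pi p n hn0,
    NonsplitAux.iota_inj p n hn0, NonsplitAux.pi_surj p n hn0,
    NonsplitAux.range_eq_ker p n hn0, NonsplitAux.conj_formula p n hn0,
    NonsplitAux.not_split p n hn hn0⟩
end

section
/- Let 0 < δ < 1/2, p a prime. Fix s independent uniform random elements h₁,…,h_s of 𝔽_p[C_p]. For fixed nonzero f with rank T_f = r, the probability that |(1/(sp)) ∑_{i=1}^s ∑_{σ∈C_p} e_p(σh_i · f)| > 1 − δ is at most 8·exp(−(1−2δ)²·r·s/4). Assuming this, the probability that there exists a nonzero f ∈ 𝔽_p[C_p] with |(1/(sp))∑_{i=1}^s∑_{σ∈C_p} e_p(σh_i·f)| > 1−δ is at most 8·∑_{r=1}^{p} p^r·exp(−(1−2δ)²rs/4), which is strictly less than 1 when s = 4c·ln(p)/(1−2δ)² for suitable c > 1 and p large enough; hence there exist h₁,…,h_s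 with s = O(ln p/(1−2δ)²) such that the multiset ⋃_i C_p·h_i is δ-balanced. -/
/-- The additive character `e_p(α) = exp(2πiα/p)` of `𝔽_p`. -/
noncomputable def ep (p : ℕ) (α : ZMod p) : ℂ :=
  Complex.exp (2 * Real.pi * Complex.I * (α.val : ℂ) / (p : ℂ))

/-- The dot product `f·h = ∑_{x∈C_p} f(x)h(x)` on `𝔽_p[C_p]`. -/
def dotFp (p : ℕ) [NeZero p] (f h : ZMod p → ZMod p) : ZMod p :=
  ∑ x : ZMod p, f x * h x

/-- `rank T_f`, realized as the dimension of the span of the `C_p`-orbit of `f`. -/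
noncomputable def rankTf (p : ℕ) [NeZero p] (f : ZMod p → ZMod p) : ℕ :=
  Module.finrank (ZMod p)
    (Submodule.span (ZMod p) (Set.range fun σ : ZMod p => fun x => f (x - σ)))

/- ### Auxiliary development: the shift endomorphism and counting `f` of given rank -/

noncomputable def shiftE (p : ℕ) [NeZero p] : Module.End (ZMod p) (ZMod p → ZMod p) where
  toFun f := fun x => f (x - 1)
  map_add' := by intros; rfl
  map_smul' := by intros; rfl

lemma shiftE_pow (p : ℕ) [NeZero p] (k : ℕ) (f : ZMod p → ZMod p) :
    (shiftE p ^ k) f = fun x => f (x - (k : ZMod p)) := by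
  induction k with
  | zero => simp
  | succ n ih =>
    rw [pow_succ', Module.End.mul_apply]
    funext x
    show ((shiftE p ^ n) f) (x - 1) = f (x - ((n : ℕ) + 1 : ℕ))
    rw [ih]
    push_cast
    ring_nf

lemma shiftE_pow_card (p : ℕ) [NeZero p] : (shiftE p) ^ p = 1 := by
  refine LinearMap.ext fun f => ?_
  rw [shiftE_pow]
  simp

instance endNontrivial (p : ℕ) [Fact p.Prime] :
    Nontrivial (Module.End (ZMod p) (ZMod p → ZMod p)) := by
  refine ⟨1, 0, fun h => ?_⟩
  have := DFunLike.congr_fun h (1 : ZMod p → ZMod p)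
  simp at this

lemma N_pow_card (p : ℕ) [Fact p.Prime] : (shiftE p - 1) ^ p = 0 := by
  haveI : CharP (Module.End (ZMod p) (ZMod p → ZMod p)) p :=
    charP_of_injective_ringHom (algebraMap (ZMod p) _).injective p
  haveI : ExpChar (Module.End (ZMod p) (ZMod p → ZMod p)) p :=
    ExpChar.prime (Fact.out)
  rw [sub_pow_expChar_of_commute _ (Commute.one_right _), shiftE_pow_card, one_pow, sub_self]

lemma mem_span_orbit (p : ℕ) [NeZero p] (f : ZMod p → ZMod p) :
    f ∈ Submodule.span (ZMod p) (Set.range fun σ : ZMod p => fun x => f (x - σ)) := by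
  apply Submodule.subset_span
  exact ⟨0, by funext x; simp⟩

lemma span_orbit_invariant (p : ℕ) [NeZero p] (f : ZMod p → ZMod p) :
    ∀ v ∈ Submodule.span (ZMod p) (Set.range fun σ : ZMod p => fun x => f (x - σ)),
      (shiftE p - 1) v ∈
        Submodule.span (ZMod p) (Set.range fun σ : ZMod p => fun x => f (x - σ)) := by
  set V := Submodule.span (ZMod p) (Set.range fun σ : ZMod p => fun x => f (x - σ)) with hV
  have hS : ∀ v ∈ V, shiftE p v ∈ V := by
    intro v hv
    induction hv using Submodule.span_induction with
    | mem g hg =>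
      obtain ⟨σ, rfl⟩ := hg
      apply Submodule.subset_span
      refine ⟨σ + 1, ?_⟩
      funext x
      show f (x - (σ + 1)) = f (x - 1 - σ)
      ring_nf
    | zero => simp
    | add a b _ _ ha hb => rw [map_add]; exact V.add_mem ha hb
    | smul c a _ ha => rw [map_smul]; exact V.smul_mem c ha
  intro v hv
  have : (shiftE p - 1) v = shiftE p v - v := rfl
  rw [this]
  exact V.sub_mem (hS v hv) hv

lemma annul (p : ℕ) [Fact p.Prime] (f : ZMod p → ZMod p) :
    ((shiftE p - 1) ^ (rankTf p f)) f = 0 := by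
  set V := Submodule.span (ZMod p) (Set.range fun σ : ZMod p => fun x => f (x - σ)) with hVdef
  have hNV := span_orbit_invariant p f
  set N' := (shiftE p - 1).restrict hNV with hN'
  have hmem : f ∈ V := mem_span_orbit p f
  have hker : (⟨f, hmem⟩ : V) ∈ LinearMap.ker (N' ^ p) := by
    rw [LinearMap.mem_ker, hN', Module.End.pow_restrict]
    apply Subtype.ext
    rw [LinearMap.restrict_apply]
    show ((shiftE p - 1) ^ p) f = 0
    rw [N_pow_card p]
    rfl
  have hker2 := Module.End.ker_pow_le_ker_pow_finrank N' p hker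
  rw [LinearMap.mem_ker, hN', Module.End.pow_restrict] at hker2
  have := congrArg Subtype.val hker2
  rw [LinearMap.restrict_apply] at this
  exact this

lemma vanish (p : ℕ) [Fact p.Prime] :
    ∀ (r : ℕ) (f : ZMod p → ZMod p), ((shiftE p - 1) ^ r) f = 0 →
      (∀ i : ZMod p, p - r ≤ i.val → f i = 0) → f = 0 := by
  intro r
  induction r with
  | zero =>
    intro f hf _
    simpa using hf
  | succ n ih =>
    intro f hf hvals
    by_cases hdeg : p ≤ n + 1
    · funext i
      exact hvals i (by omega)
    -- now n + 1 < p
    have hplt : n + 1 < p := by omega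
    set g := (shiftE p - 1) f with hg
    have hgf : ∀ x : ZMod p, g x = f (x - 1) - f x := fun x => rfl
    have hgpow : ((shiftE p - 1) ^ n) g = 0 := by
      rw [hg, ← Module.End.mul_apply, ← pow_succ]
      exact hf
    have hgvals : ∀ i : ZMod p, p - n ≤ i.val → g i = 0 := by
      intro i hi
      have hival : i.val < p := ZMod.val_lt i
      have hione : 1 ≤ i.val := by omega
      have hfi : f i = 0 := hvals i (by omega)
      have hi2 : ((i.val : ℕ) : ZMod p) = i := ZMod.natCast_rightInverse i
      have hisub : (i - 1 : ZMod p) = ((i.val - 1 : ℕ) : ZMod p) := by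
        rw [Nat.cast_sub hione, Nat.cast_one, hi2]
      have hfsub : f (i - 1) = 0 := by
        rw [hisub]
        apply hvals
        rw [ZMod.val_natCast_of_lt (by omega)]
        omega
      rw [hgf, hfi, hfsub, sub_zero]
    have hgzero : g = 0 := ih g hgpow hgvals
    -- f is constant
    have hconst : ∀ x : ZMod p, f (x - 1) = f x := by
      intro x
      have h0 := congrFun hgzero x
      rw [hgf] at h0
      exact sub_eq_zero.mp h0
    have hcast : ∀ m : ℕ, f ((m : ℕ) : ZMod p) = f 0 := by
      intro m
      induction m with
      | zero => simp
      | succ k ihk =>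
        have := hconst (((k + 1 : ℕ) : ZMod p))
        have heq : ((k + 1 : ℕ) : ZMod p) - 1 = ((k : ℕ) : ZMod p) := by push_cast; ring
        rw [heq] at this
        rw [← this, ihk]
    have hzero : f 0 = 0 := by
      have h1 : f (((p - 1 : ℕ) : ZMod p)) = 0 := by
        apply hvals
        rw [ZMod.val_natCast_of_lt (by omega)]
        omega
      rw [← hcast (p - 1), h1]
    funext x
    have hx : ((x.val : ℕ) : ZMod p) = x := ZMod.natCast_rightInverse x
    have : f x = f 0 := by
      rw [← hx]
      exact hcast _
    rw [this, hzero]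
    rfl

open Classical in
lemma card_ker_le (p : ℕ) [Fact p.Prime] (r : ℕ) :
    Fintype.card {f : ZMod p → ZMod p // ((shiftE p - 1) ^ r) f = 0} ≤ p ^ r := by
  classical
  have hinj : Function.Injective
      (fun F : {f : ZMod p → ZMod p // ((shiftE p - 1) ^ r) f = 0} =>
        (fun j : Fin r => F.1 ((p - 1 - (j : ℕ) : ℕ) : ZMod p))) := by
    rintro ⟨f, hf⟩ ⟨f', hf'⟩ h
    simp only at h
    have hd : ((shiftE p - 1) ^ r) (f - f') = 0 := by
      rw [map_sub, hf, hf', sub_zero]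
    have hdv : ∀ i : ZMod p, p - r ≤ i.val → (f - f') i = 0 := by
      intro i hi
      have hival : i.val < p := ZMod.val_lt i
      have hr1 : 1 ≤ r := by omega
      set j : ℕ := p - 1 - i.val with hj
      have hjr : j < r := by omega
      have hcast : ((p - 1 - j : ℕ) : ZMod p) = i := by
        have : p - 1 - j = i.val := by omega
        rw [this]
        exact ZMod.natCast_rightInverse i
      have := congrFun h ⟨j, hjr⟩
      simp only at this
      rw [hcast] at this
      show f i - f' i = 0
      rw [this, sub_self]
    have : f - f' = 0 := vanish p r (f - f') hd hdv
    have : f = f' := by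
      funext x
      have := congrFun this x
      exact sub_eq_zero.mp this
    exact Subtype.ext this
  calc Fintype.card {f : ZMod p → ZMod p // ((shiftE p - 1) ^ r) f = 0}
      ≤ Fintype.card (Fin r → ZMod p) := Fintype.card_le_of_injective _ hinj
    _ = p ^ r := by simp [ZMod.card]

open Classical in
lemma card_rank_le (p : ℕ) [Fact p.Prime] (r : ℕ) :
    (Finset.univ.filter
        (fun f : ZMod p → ZMod p => f ≠ 0 ∧ rankTf p f = r)).card ≤ p ^ r := by
  classical
  have hsub : Finset.univ.filter (fun f : ZMod p → ZMod p => f ≠ 0 ∧ rankTf p f = r) ⊆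
      Finset.univ.filter (fun f : ZMod p → ZMod p => ((shiftE p - 1) ^ r) f = 0) := by
    intro f hf
    rw [Finset.mem_filter] at hf ⊢
    refine ⟨Finset.mem_univ _, ?_⟩
    rw [← hf.2.2]
    exact annul p f
  calc (Finset.univ.filter (fun f : ZMod p → ZMod p => f ≠ 0 ∧ rankTf p f = r)).card
      ≤ (Finset.univ.filter
          (fun f : ZMod p → ZMod p => ((shiftE p - 1) ^ r) f = 0)).card :=
        Finset.card_le_card hsub
    _ = Fintype.card {f : ZMod p → ZMod p // ((shiftE p - 1) ^ r) f = 0} :=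
        (Fintype.card_subtype _).symm
    _ ≤ p ^ r := card_ker_le p r

lemma rank_mem_Icc (p : ℕ) [Fact p.Prime] (f : ZMod p → ZMod p) (hf : f ≠ 0) :
    rankTf p f ∈ Finset.Icc 1 p := by
  rw [Finset.mem_Icc]
  constructor
  · have hmem := mem_span_orbit p f
    have : Nontrivial (Submodule.span (ZMod p)
        (Set.range fun σ : ZMod p => fun x => f (x - σ))) := by
      refine ⟨⟨f, hmem⟩, 0, fun h => hf ?_⟩
      exact congrArg Subtype.val h
    exact Module.finrank_pos
  · calc rankTf p f ≤ Module.finrank (ZMod p) (ZMod p → ZMod p) := Submodule.finrank_le _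
      _ = p := by simp [Module.finrank_pi, ZMod.card]

lemma dotFp_comm (p : ℕ) [NeZero p] (f g : ZMod p → ZMod p) :
    dotFp p f g = dotFp p g f := by
  simp [dotFp, mul_comm]

/-- Union bound and existence of `δ`-balanced unions of orbits: assuming the
Meshulam–Wigderson bound `Prob(B_δ(f)) ≤ 8·exp(−(1−2δ)²·rank(T_f)·s/4)` for every
nonzero `f`, the probability that some nonzero `f` is bad is at most
`8·∑_{r=1}^p p^r·exp(−(1−2δ)²rs/4)`; whenever this bound is `< 1` (e.g. for
`s = 4c·ln p/(1−2δ)²`, `c > 1`, `p` large) there exist `h₁,…,h_s` such that the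
multiset `⋃ᵢ C_p·hᵢ` is `δ`-balanced. -/
theorem balanced_union_of_orbits_exists (p s : ℕ) [Fact p.Prime] (hs : 0 < s)
    (δ : ℝ) (hδ0 : 0 < δ) (hδ : δ < 1 / 2)
    (hfix : ∀ f : ZMod p → ZMod p, f ≠ 0 →
      (Nat.card {h : Fin s → ZMod p → ZMod p //
          1 - δ < ‖∑ i : Fin s, ∑ σ : ZMod p,
              ep p (dotFp p (fun x => h i (x - σ)) f)‖ / (s * p)} : ℝ) /
          (Nat.card (Fin s → ZMod p → ZMod p) : ℝ) ≤
        8 * Real.exp (-(1 - 2 * δ) ^ 2 * (rankTf p f) * s / 4)) :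
    ((Nat.card {h : Fin s → ZMod p → ZMod p //
        ∃ f : ZMod p → ZMod p, f ≠ 0 ∧
          1 - δ < ‖∑ i : Fin s, ∑ σ : ZMod p,
              ep p (dotFp p (fun x => h i (x - σ)) f)‖ / (s * p)} : ℝ) /
        (Nat.card (Fin s → ZMod p → ZMod p) : ℝ) ≤
      8 * ∑ r ∈ Finset.Icc 1 p, (p : ℝ) ^ r * Real.exp (-(1 - 2 * δ) ^ 2 * r * s / 4)) ∧
    (8 * ∑ r ∈ Finset.Icc 1 p, (p : ℝ) ^ r * Real.exp (-(1 - 2 * δ) ^ 2 * r * s / 4) < 1 →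
      ∃ h : Fin s → ZMod p → ZMod p,
        ∀ f : ZMod p → ZMod p, f ≠ 0 →
          ‖(((Finset.univ : Finset (Fin s × ZMod p)).val.map
                (fun iσ => fun x => h iσ.1 (x - iσ.2))).map
              (fun g => ep p (dotFp p f g))).sum‖ ≤
            (1 - δ) * (((Finset.univ : Finset (Fin s × ZMod p)).val.map
                (fun iσ => fun x => h iσ.1 (x - iσ.2))).card : ℝ)) := by
  classical
  have hp : 0 < p := (Fact.out : p.Prime).pos
  set cond : (ZMod p → ZMod p) → (Fin s → ZMod p → ZMod p) → Prop :=
    fun f h => 1 - δ < ‖∑ i : Fin s, ∑ σ : ZMod p,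
        ep p (dotFp p (fun x => h i (x - σ)) f)‖ / (s * p) with hcond
  set Ntot : ℝ := (Nat.card (Fin s → ZMod p → ZMod p) : ℝ) with hNtotdef
  have hNtot : (0 : ℝ) < Ntot := by
    rw [hNtotdef, Nat.card_eq_fintype_card]
    exact_mod_cast Fintype.card_pos
  set nz : Finset (ZMod p → ZMod p) := Finset.univ.filter (fun f => f ≠ 0) with hnz
  set Bad : Finset (Fin s → ZMod p → ZMod p) :=
    Finset.univ.filter (fun h => ∃ f : ZMod p → ZMod p, f ≠ 0 ∧ cond f h) with hBad
  -- card of bad set as a filter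
  have hcardBad : (Nat.card {h : Fin s → ZMod p → ZMod p //
      ∃ f : ZMod p → ZMod p, f ≠ 0 ∧ cond f h} : ℝ) = (Bad.card : ℝ) := by
    rw [Nat.card_eq_fintype_card, Fintype.card_subtype]
  -- union bound on cards
  have hunion : Bad.card ≤ ∑ f ∈ nz, (Finset.univ.filter (cond f)).card := by
    have hsub : Bad ⊆ nz.biUnion (fun f => Finset.univ.filter (cond f)) := by
      intro h hh
      rw [hBad, Finset.mem_filter] at hh
      obtain ⟨-, f, hf, hc⟩ := hh
      rw [Finset.mem_biUnion]
      exact ⟨f, by simp [hnz, hf], by simp [hc]⟩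
    exact (Finset.card_le_card hsub).trans (Finset.card_biUnion_le)
  -- per-f bound from the hypothesis
  have hper : ∀ f ∈ nz, ((Finset.univ.filter (cond f)).card : ℝ) / Ntot ≤
      8 * Real.exp (-(1 - 2 * δ) ^ 2 * (rankTf p f) * s / 4) := by
    intro f hf
    rw [hnz, Finset.mem_filter] at hf
    have := hfix f hf.2
    rwa [Nat.card_eq_fintype_card, Fintype.card_subtype] at this
  -- the main chain
  have main : (Bad.card : ℝ) / Ntot ≤
      8 * ∑ r ∈ Finset.Icc 1 p, (p : ℝ) ^ r *
        Real.exp (-(1 - 2 * δ) ^ 2 * r * s / 4) := by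
    have h1 : (Bad.card : ℝ) / Ntot ≤
        (∑ f ∈ nz, ((Finset.univ.filter (cond f)).card : ℕ) : ℝ) / Ntot := by
      apply div_le_div_of_nonneg_right ?_ hNtot.le |>.trans_eq rfl
      exact_mod_cast hunion
    have h2 : (∑ f ∈ nz, ((Finset.univ.filter (cond f)).card : ℕ) : ℝ) / Ntot =
        ∑ f ∈ nz, ((Finset.univ.filter (cond f)).card : ℝ) / Ntot := by
      push_cast
      rw [Finset.sum_div]
    have h3 : ∑ f ∈ nz, ((Finset.univ.filter (cond f)).card : ℝ) / Ntot ≤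
        ∑ f ∈ nz, 8 * Real.exp (-(1 - 2 * δ) ^ 2 * (rankTf p f) * s / 4) :=
      Finset.sum_le_sum hper
    -- regroup by rank
    have h4 : ∑ f ∈ nz, 8 * Real.exp (-(1 - 2 * δ) ^ 2 * (rankTf p f) * s / 4) =
        ∑ r ∈ Finset.Icc 1 p, ∑ f ∈ nz.filter (fun f => rankTf p f = r),
          8 * Real.exp (-(1 - 2 * δ) ^ 2 * (rankTf p f) * s / 4) :=
      (Finset.sum_fiberwise_of_maps_to
        (fun f hf => rank_mem_Icc p f (by rw [hnz, Finset.mem_filter] at hf; exact hf.2)) _).symm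
    have h5 : ∀ r ∈ Finset.Icc 1 p,
        ∑ f ∈ nz.filter (fun f => rankTf p f = r),
          8 * Real.exp (-(1 - 2 * δ) ^ 2 * (rankTf p f) * s / 4) ≤
        (p : ℝ) ^ r * (8 * Real.exp (-(1 - 2 * δ) ^ 2 * r * s / 4)) := by
      intro r hr
      have heq : ∑ f ∈ nz.filter (fun f => rankTf p f = r),
          8 * Real.exp (-(1 - 2 * δ) ^ 2 * (rankTf p f) * s / 4) =
          ((nz.filter (fun f => rankTf p f = r)).card : ℝ) *
            (8 * Real.exp (-(1 - 2 * δ) ^ 2 * r * s / 4)) := by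
        rw [Finset.sum_congr rfl (fun f hf => ?_), Finset.sum_const, nsmul_eq_mul]
        rw [Finset.mem_filter] at hf
        rw [hf.2]
      rw [heq]
      have hcard : ((nz.filter (fun f => rankTf p f = r)).card : ℝ) ≤ (p : ℝ) ^ r := by
        have : nz.filter (fun f => rankTf p f = r) =
            Finset.univ.filter (fun f : ZMod p → ZMod p => f ≠ 0 ∧ rankTf p f = r) := by
          rw [hnz, Finset.filter_filter]
        rw [this]
        exact_mod_cast card_rank_le p r
      exact mul_le_mul_of_nonneg_right hcard (by positivity)
    calc (Bad.card : ℝ) / Ntot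
        ≤ ∑ f ∈ nz, ((Finset.univ.filter (cond f)).card : ℝ) / Ntot := h1.trans_eq h2
      _ ≤ ∑ f ∈ nz, 8 * Real.exp (-(1 - 2 * δ) ^ 2 * (rankTf p f) * s / 4) := h3
      _ = ∑ r ∈ Finset.Icc 1 p, ∑ f ∈ nz.filter (fun f => rankTf p f = r),
            8 * Real.exp (-(1 - 2 * δ) ^ 2 * (rankTf p f) * s / 4) := h4
      _ ≤ ∑ r ∈ Finset.Icc 1 p,
            (p : ℝ) ^ r * (8 * Real.exp (-(1 - 2 * δ) ^ 2 * r * s / 4)) :=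
          Finset.sum_le_sum h5
      _ = 8 * ∑ r ∈ Finset.Icc 1 p,
            (p : ℝ) ^ r * Real.exp (-(1 - 2 * δ) ^ 2 * r * s / 4) := by
          rw [Finset.mul_sum]
          exact Finset.sum_congr rfl (fun r _ => by ring)
  constructor
  · rw [hcardBad]
    exact main
  · intro hlt
    have hbadlt : (Bad.card : ℝ) < Ntot := by
      have := (main.trans_lt hlt)
      rwa [div_lt_one hNtot] at this
    have hbadcard : Bad.card < Fintype.card (Fin s → ZMod p → ZMod p) := by
      rw [hNtotdef, Nat.card_eq_fintype_card] at hbadlt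
      exact_mod_cast hbadlt
    have hex : ∃ h : Fin s → ZMod p → ZMod p, h ∉ Bad := by
      by_contra hc
      push_neg at hc
      have : (Finset.univ : Finset (Fin s → ZMod p → ZMod p)) ⊆ Bad :=
        fun h _ => hc h
      have := Finset.card_le_card this
      rw [Finset.card_univ] at this
      omega
    obtain ⟨h, hh⟩ := hex
    refine ⟨h, fun f hf => ?_⟩
    have hnotc : ¬ cond f h := by
      intro hcf
      exact hh (by rw [hBad, Finset.mem_filter]; exact ⟨Finset.mem_univ _, f, hf, hcf⟩)
    have hle : ‖∑ i : Fin s, ∑ σ : ZMod p,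
        ep p (dotFp p (fun x => h i (x - σ)) f)‖ / ((s : ℝ) * p) ≤ 1 - δ :=
      not_lt.mp hnotc
    -- rewrite the multiset sum and card
    have hsum : (((Finset.univ : Finset (Fin s × ZMod p)).val.map
          (fun iσ => fun x => h iσ.1 (x - iσ.2))).map
        (fun g => ep p (dotFp p f g))).sum =
        ∑ i : Fin s, ∑ σ : ZMod p, ep p (dotFp p (fun x => h i (x - σ)) f) := by
      rw [Multiset.map_map]
      have : (((Finset.univ : Finset (Fin s × ZMod p)).val.map
          ((fun g => ep p (dotFp p f g)) ∘ (fun iσ => fun x => h iσ.1 (x - iσ.2))))).sum =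
          ∑ iσ : Fin s × ZMod p, ep p (dotFp p f (fun x => h iσ.1 (x - iσ.2))) := rfl
      rw [this, Fintype.sum_prod_type]
      exact Finset.sum_congr rfl fun i _ => Finset.sum_congr rfl fun σ _ => by
        rw [dotFp_comm]
    have hcard : ((((Finset.univ : Finset (Fin s × ZMod p)).val.map
          (fun iσ => fun x => h iσ.1 (x - iσ.2))).map
        (fun g => ep p (dotFp p f g))).card : ℝ) = (s : ℝ) * p := by
      rw [Multiset.card_map, Multiset.card_map]
      have : ((Finset.univ : Finset (Fin s × ZMod p)).val).card =
          Fintype.card (Fin s × ZMod p) := rfl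
      rw [this, Fintype.card_prod, Fintype.card_fin, ZMod.card]
      push_cast
      ring
    rw [hsum]
    have hspr : (0 : ℝ) < (s : ℝ) * p := by positivity
    have hm : (((Finset.univ : Finset (Fin s × ZMod p)).val.map
        (fun iσ => fun x => h iσ.1 (x - iσ.2))).card : ℝ) = (s : ℝ) * p := by
      rw [Multiset.card_map]
      have huc : ((Finset.univ : Finset (Fin s × ZMod p)).val).card =
          Fintype.card (Fin s × ZMod p) := rfl
      rw [huc, Fintype.card_prod, Fintype.card_fin, ZMod.card]
      push_cast
      ring
    rw [hm]
    exact (div_le_iff₀ hspr).mp hle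
end
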